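/- In W(R) for R an 𝔽_p-algebra, for any element z = [x] + Vy (x ∈ R, y ∈ W(R)), one has the identity of Kähler differentials [x]^{p−1}·d[x] + dy = z^{p−1}·dz + d((F(z) − z^p)/p) in Ω¹_{W(R)}[1/p], where F is the Witt vector Frobenius. -/
import Mathlib


open WittVector

theorem frob_teich (p : ℕ) [Fact p.Prime] (R : Type) [CommRing R] [CharP R p] (x : R) :
    frobenius (teichmuller p x) = teichmuller p x ^ p := by
  rw [frobenius_eq_map_frobenius, map_teichmuller, ← map_pow]
  rfl

/-- In `W(R)` for `R` an `𝔽_p`-algebra, for any element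
`z = [x] + V y` one has the identity
`[x]^{p−1}·d[x] + d y = z^{p−1}·d z + d((F z − z^p)/p)`
of Kähler differentials, interpreted (as `W(R)` may have `p`-torsion) after
multiplying both sides by `p`. -/
theorem statement10
    (p : ℕ) [Fact p.Prime] (R : Type) [CommRing R] [CharP R p]
    (x : R) (y : WittVector p R) (z : WittVector p R)
    (hz : z = teichmuller p x + verschiebung y) :
    (p : ℤ) • ((teichmuller p x) ^ (p - 1) •
        KaehlerDifferential.D ℤ (WittVector p R) (teichmuller p x) +
      KaehlerDifferential.D ℤ (WittVector p R) y) =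
    (p : ℤ) • (z ^ (p - 1) • KaehlerDifferential.D ℤ (WittVector p R) z) +
      KaehlerDifferential.D ℤ (WittVector p R) (frobenius z - z ^ p) := by
  set D := KaehlerDifferential.D ℤ (WittVector p R) with hD
  have hF : frobenius z = teichmuller p x ^ p + (p : ℤ) • y := by
    rw [hz, map_add, frobenius_verschiebung, frob_teich]
    congr 1
    push_cast [zsmul_eq_mul]
    ring
  have h1 : D (frobenius z - z ^ p)
      = (p : ℤ) • (teichmuller p x) ^ (p - 1) • D (teichmuller p x)
        + (p : ℤ) • D y - (p : ℤ) • z ^ (p - 1) • D z := by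
    rw [map_sub, hF, map_add, D.map_smul, Derivation.leibniz_pow, Derivation.leibniz_pow,
      ← Nat.cast_smul_eq_nsmul ℤ, ← Nat.cast_smul_eq_nsmul ℤ]
  rw [h1]
  module
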